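/- arXiv:2209.07142 — 4 statements merged into one kernel-verified Lean document; each statement's English description precedes it below -/
import Mathlib

section
/- For every z > 1, |z³·(e^{z²} erfc(z) - (1/(2z) - 1/(4z³)))| ≤ 3/(8z²). -/
noncomputable def erfc (z : ℝ) : ℝ := ∫ s in Set.Ioi z, Real.exp (-s^2)

open MeasureTheory Set Filter Real

lemma tendsto_exp_neg_sq : Tendsto (fun s : ℝ => Real.exp (-s^2)) atTop (nhds 0) := by
  apply Real.tendsto_exp_atBot.comp
  rw [tendsto_neg_atBot_iff]
  exact tendsto_pow_atTop two_ne_zero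

set_option maxHeartbeats 1000000 in
theorem erfc_remainder_bound (z : ℝ) (hz : 1 < z) :
    |z ^ 3 * (Real.exp (z ^ 2) * erfc z - (1 / (2 * z) - 1 / (4 * z ^ 3)))|
      ≤ 3 / (8 * z ^ 2) := by
  have hz0 : 0 < z := lt_trans one_pos hz
  set G : ℝ → ℝ := fun s => Real.exp (-s^2) * ((2*s)⁻¹ - (4*s^3)⁻¹) with hG
  -- integrability of exp(-s²) on Ioi z
  have intA : IntegrableOn (fun s : ℝ => Real.exp (-s^2)) (Ioi z) := by
    have := integrable_exp_neg_mul_sq (b := 1) one_pos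
    simpa using this.integrableOn
  -- integrability of exp(-s²)/s⁴ on Ioi z
  have intB : IntegrableOn (fun s : ℝ => Real.exp (-s^2) / s^4) (Ioi z) := by
    apply intA.mono' (Measurable.aestronglyMeasurable (by fun_prop :
      Measurable fun s : ℝ => Real.exp (-s^2) / s^4))
    filter_upwards [ae_restrict_mem measurableSet_Ioi] with s hs
    have hs1 : 1 < s := lt_trans hz hs
    have h4 : 1 ≤ s^4 := one_le_pow₀ hs1.le
    rw [Real.norm_eq_abs, abs_of_nonneg (div_nonneg (Real.exp_pos _).le (by positivity))]
    exact div_le_self (Real.exp_pos _).le h4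
  -- integrability of s*exp(-s²)
  have intC : IntegrableOn (fun s : ℝ => s * Real.exp (-s^2)) (Ioi z) := by
    have := integrable_mul_exp_neg_mul_sq (b := 1) one_pos
    simpa using this.integrableOn
  -- FTC: ∫_z^∞ (exp(-s²) - (3/4) exp(-s²)/s⁴) = G z
  have key : ∫ s in Ioi z, (Real.exp (-s^2) - (3/4) * (Real.exp (-s^2)/s^4)) = G z := by
    have hderiv : ∀ x ∈ Ici z, HasDerivAt (fun s => -G s)
        (Real.exp (-x^2) - (3/4) * (Real.exp (-x^2)/x^4)) x := by
      intro x hx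
      have hx1 : 1 < x := lt_of_lt_of_le hz hx
      have hx0 : x ≠ 0 := by positivity
      have h1 : HasDerivAt (fun s : ℝ => Real.exp (-s^2)) (Real.exp (-x^2) * (-2*x)) x := by
        have : HasDerivAt (fun s : ℝ => -s^2) (-2*x) x := by
          simpa using ((hasDerivAt_pow 2 x).fun_neg)
        exact (Real.hasDerivAt_exp _).comp x this
      have ha : HasDerivAt (fun s : ℝ => (2*s)⁻¹) (-(2*1)/(2*x)^2) x :=
        ((hasDerivAt_id x).const_mul (2:ℝ)).inv (mul_ne_zero two_ne_zero hx0)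
      have hb : HasDerivAt (fun s : ℝ => (4*s^3)⁻¹) (-(4*(3*x^2))/(4*x^3)^2) x := by
        have hp : HasDerivAt (fun s : ℝ => 4*s^3) (4*(3*x^2)) x := by
          simpa [mul_comm] using (hasDerivAt_pow 3 x).const_mul (4:ℝ)
        exact hp.inv (by positivity)
      have hd := (h1.fun_mul (ha.fun_sub hb)).fun_neg
      refine hd.congr_deriv ?_
      field_simp
      ring
    have hint : IntegrableOn (fun s : ℝ =>
        Real.exp (-s^2) - (3/4) * (Real.exp (-s^2)/s^4)) (Ioi z) :=
      intA.sub (intB.const_mul _)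
    have htend : Tendsto (fun s => -G s) atTop (nhds 0) := by
      have t1 : Tendsto (fun s : ℝ => (2*s)⁻¹) atTop (nhds 0) :=
        tendsto_inv_atTop_zero.comp (tendsto_id.const_mul_atTop two_pos)
      have t2 : Tendsto (fun s : ℝ => (4*s^3)⁻¹) atTop (nhds 0) :=
        tendsto_inv_atTop_zero.comp
          ((tendsto_pow_atTop three_ne_zero).const_mul_atTop (by norm_num))
      have h0 := (tendsto_exp_neg_sq.mul (t1.sub t2)).neg
      rw [show -((0:ℝ)*(0-0)) = 0 by norm_num] at h0
      exact h0
    have hres := integral_Ioi_of_hasDerivAt_of_tendsto' hderiv hint htend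
    rw [hres]
    simp
  -- split erfc
  have hsplit : erfc z = G z + (3/4) * ∫ s in Ioi z, Real.exp (-s^2)/s^4 := by
    have := integral_sub intA (intB.const_mul (3/4))
    rw [key] at this
    have h2 : (∫ s in Ioi z, Real.exp (-s^2)) = erfc z := rfl
    rw [h2] at this
    rw [integral_const_mul] at this
    linarith
  -- value of ∫ s exp(-s²)
  have keyC : ∫ s in Ioi z, s * Real.exp (-s^2) = Real.exp (-z^2) / 2 := by
    have hderiv : ∀ x ∈ Ici z, HasDerivAt (fun s : ℝ => -Real.exp (-s^2)/2)
        (x * Real.exp (-x^2)) x := by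
      intro x _
      have h1 : HasDerivAt (fun s : ℝ => Real.exp (-s^2)) (Real.exp (-x^2) * (-2*x)) x := by
        have : HasDerivAt (fun s : ℝ => -s^2) (-2*x) x := by
          simpa using ((hasDerivAt_pow 2 x).fun_neg)
        exact (Real.hasDerivAt_exp _).comp x this
      have := (h1.fun_neg).div_const 2
      refine this.congr_deriv ?_; ring
    have htend : Tendsto (fun s : ℝ => -Real.exp (-s^2)/2) atTop (nhds 0) := by
      have := (tendsto_exp_neg_sq.neg).div_const 2
      simpa using this
    have := integral_Ioi_of_hasDerivAt_of_tendsto' hderiv intC htend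
    rw [this]; ring
  -- bound on ∫ exp(-s²)/s⁴
  have hub : (∫ s in Ioi z, Real.exp (-s^2)/s^4) ≤ Real.exp (-z^2) / (2 * z^5) := by
    have hmono : (∫ s in Ioi z, Real.exp (-s^2)/s^4)
        ≤ ∫ s in Ioi z, (s * Real.exp (-s^2)) / z^5 := by
      apply setIntegral_mono_on intB (intC.div_const _) measurableSet_Ioi
      intro s hs
      have hzs : z < s := hs
      have hs0 : 0 < s := lt_trans hz0 hzs
      rw [div_le_div_iff₀ (by positivity) (by positivity)]
      have h5 : z^5 ≤ s^5 := pow_le_pow_left₀ hz0.le hzs.le 5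
      calc Real.exp (-s^2) * z^5 ≤ Real.exp (-s^2) * s^5 := by gcongr
        _ = s * Real.exp (-s^2) * s^4 := by ring
    calc (∫ s in Ioi z, Real.exp (-s^2)/s^4) ≤ ∫ s in Ioi z, (s * Real.exp (-s^2)) / z^5 := hmono
      _ = (∫ s in Ioi z, s * Real.exp (-s^2)) / z^5 := integral_div _ _
      _ = Real.exp (-z^2) / (2 * z^5) := by rw [keyC]; ring
  have hlb : 0 ≤ ∫ s in Ioi z, Real.exp (-s^2)/s^4 := by
    apply setIntegral_nonneg measurableSet_Ioi
    intro s hs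
    have : 0 < s := lt_trans hz0 hs
    positivity
  -- assemble
  have hcancel : Real.exp (z^2) * Real.exp (-z^2) = 1 := by
    rw [← Real.exp_add]; simp
  have hGval : Real.exp (z^2) * G z = 1/(2*z) - 1/(4*z^3) := by
    have hGz : G z = Real.exp (-z^2) * ((2*z)⁻¹ - (4*z^3)⁻¹) := rfl
    rw [hGz, ← mul_assoc, hcancel, one_mul, one_div, one_div]
  have hexpr : z ^ 3 * (Real.exp (z ^ 2) * erfc z - (1 / (2 * z) - 1 / (4 * z ^ 3)))
      = z^3 * Real.exp (z^2) * ((3/4) * ∫ s in Ioi z, Real.exp (-s^2)/s^4) := by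
    rw [hsplit, mul_add, hGval]; ring
  have hnn : 0 ≤ z^3 * Real.exp (z^2) * ((3/4) * ∫ s in Ioi z, Real.exp (-s^2)/s^4) :=
    mul_nonneg (by positivity) (mul_nonneg (by norm_num) hlb)
  rw [hexpr, abs_of_nonneg hnn]
  calc z^3 * Real.exp (z^2) * ((3/4) * ∫ s in Ioi z, Real.exp (-s^2)/s^4)
      ≤ z^3 * Real.exp (z^2) * ((3/4) * (Real.exp (-z^2) / (2 * z^5))) := by gcongr
    _ = 3 / (8 * z^2) * (Real.exp (z^2) * Real.exp (-z^2)) := by field_simp; ring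
    _ = 3 / (8 * z^2) := by rw [hcancel, mul_one]
end

section
/- As z → ∞, erfc(z) = (1/(2z) - 1/(4z³) + o(1/z³)) e^{-z²}; equivalently, z³·(e^{z²} erfc(z) - 1/(2z) + 1/(4z³)) → 0 as z → ∞. -/
open MeasureTheory Filter Set

/-- The approximating function. -/
noncomputable def erfF (s : ℝ) : ℝ := Real.exp (-s^2) * ((2*s)⁻¹ - (4*s^3)⁻¹)

lemma hasDerivAt_erfF {s : ℝ} (hs : 0 < s) :
    HasDerivAt erfF (-(Real.exp (-s^2) * (1 - 3/(4*s^4)))) s := by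
  have h1 : HasDerivAt (fun t : ℝ => Real.exp (-t^2)) (Real.exp (-s^2) * (-(2*s))) s := by
    have := ((hasDerivAt_pow 2 s).neg).exp
    simpa [mul_comm] using this
  have h2a : HasDerivAt (fun t : ℝ => 2*t) 2 s := by
    simpa using (hasDerivAt_id s).const_mul 2
  have h2b : HasDerivAt (fun t : ℝ => 4*t^3) (4*(3*s^2)) s := by
    simpa using (hasDerivAt_pow 3 s).const_mul 4
  have i1 := h2a.inv (by positivity : (2*s) ≠ 0)
  have i2 := h2b.inv (by positivity : (4*s^3) ≠ 0)
  have := h1.mul (i1.sub i2)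
  refine this.congr_deriv ?_
  simp only [Pi.sub_apply, Pi.inv_apply]
  field_simp
  ring

lemma erfF_tendsto : Tendsto erfF atTop (nhds 0) := by
  have h1 : Tendsto (fun s : ℝ => Real.exp (-s^2)) atTop (nhds 0) := by
    apply Real.tendsto_exp_atBot.comp
    exact tendsto_neg_atBot_iff.mpr (tendsto_pow_atTop (by norm_num))
  have ha : Tendsto (fun s : ℝ => 2*s) atTop atTop :=
    Tendsto.const_mul_atTop (by norm_num) tendsto_id
  have hb : Tendsto (fun s : ℝ => 4*s^3) atTop atTop :=
    Tendsto.const_mul_atTop (by norm_num) (tendsto_pow_atTop (by norm_num))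
  have h2 : Tendsto (fun s : ℝ => (2*s)⁻¹ - (4*s^3)⁻¹) atTop (nhds (0 - 0)) :=
    Tendsto.sub (tendsto_inv_atTop_zero.comp ha) (tendsto_inv_atTop_zero.comp hb)
  have h := h1.mul h2
  show Tendsto (fun s : ℝ => Real.exp (-s^2) * ((2*s)⁻¹ - (4*s^3)⁻¹)) atTop (nhds 0)
  simpa only [mul_zero, sub_zero, zero_mul] using h

lemma integrableOn_gauss (z : ℝ) : IntegrableOn (fun s : ℝ => Real.exp (-s^2)) (Ioi z) := by
  have : Integrable (fun s : ℝ => Real.exp (-(1:ℝ)*s^2)) := integrable_exp_neg_mul_sq one_pos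
  simpa using this.integrableOn

lemma integral_erfF' {z : ℝ} (hz : 1 ≤ z) :
    IntegrableOn (fun s => Real.exp (-s^2) * (1 - 3/(4*s^4))) (Ioi z) ∧
    (∫ s in Ioi z, Real.exp (-s^2) * (1 - 3/(4*s^4))) = erfF z := by
  have hz0 : 0 < z := lt_of_lt_of_le one_pos hz
  have hderiv : ∀ x ∈ Ici z, HasDerivAt (fun t => -(erfF t))
      (Real.exp (-x^2) * (1 - 3/(4*x^4))) x := by
    intro x hx
    have hx0 : 0 < x := lt_of_lt_of_le hz0 hx
    have := (hasDerivAt_erfF hx0).neg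
    simp only [neg_neg] at this
    exact this
  have hpos : ∀ x ∈ Ioi z, 0 ≤ Real.exp (-x^2) * (1 - 3/(4*x^4)) := by
    intro x hx
    have hx1 : (1:ℝ) ≤ x := le_of_lt (lt_of_le_of_lt hz hx)
    have hx4 : (1:ℝ) ≤ x^4 := one_le_pow₀ hx1
    have : 3/(4*x^4) ≤ 1 := by
      rw [div_le_one (by positivity)]; nlinarith
    have := Real.exp_pos (-x^2)
    nlinarith
  have htend : Tendsto (fun t => -(erfF t)) atTop (nhds (-0)) := erfF_tendsto.neg
  have hint := integrableOn_Ioi_deriv_of_nonneg' hderiv hpos htend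
  have heq := integral_Ioi_of_hasDerivAt_of_nonneg' hderiv hpos htend
  refine ⟨hint, ?_⟩
  rw [heq]; ring

lemma integral_s_gauss {z : ℝ} (hz : 0 < z) :
    IntegrableOn (fun s : ℝ => s * Real.exp (-s^2)) (Ioi z) ∧
    (∫ s in Ioi z, s * Real.exp (-s^2)) = Real.exp (-z^2) / 2 := by
  have hderiv : ∀ x ∈ Ici z, HasDerivAt (fun t : ℝ => -(Real.exp (-t^2)/2))
      (x * Real.exp (-x^2)) x := by
    intro x _
    have h1 : HasDerivAt (fun t : ℝ => Real.exp (-t^2)) (Real.exp (-x^2) * (-(2*x))) x := by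
      simpa [mul_comm] using ((hasDerivAt_pow 2 x).neg).exp
    have := (h1.div_const 2).neg
    refine this.congr_deriv ?_
    ring
  have hpos : ∀ x ∈ Ioi z, 0 ≤ x * Real.exp (-x^2) := by
    intro x hx
    have : 0 < x := lt_trans hz hx
    positivity
  have htend : Tendsto (fun t : ℝ => -(Real.exp (-t^2)/2)) atTop (nhds (-(0/2))) := by
    apply Tendsto.neg
    apply Tendsto.div_const
    apply Real.tendsto_exp_atBot.comp
    exact tendsto_neg_atBot_iff.mpr (tendsto_pow_atTop (by norm_num))
  refine ⟨integrableOn_Ioi_deriv_of_nonneg' hderiv hpos htend, ?_⟩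
  rw [integral_Ioi_of_hasDerivAt_of_nonneg' hderiv hpos htend]; ring

theorem erfc_second_order_asymptotic :
    Filter.Tendsto
      (fun z : ℝ => z ^ 3 * (Real.exp (z ^ 2) * erfc z - 1 / (2 * z) + 1 / (4 * z ^ 3)))
      Filter.atTop (nhds 0) := by
  have key : ∀ z : ℝ, 1 ≤ z →
      0 ≤ erfc z - erfF z ∧ erfc z - erfF z ≤ 3/(8*z^5) * Real.exp (-z^2) := by
    intro z hz
    have hz0 : 0 < z := lt_of_lt_of_le one_pos hz
    obtain ⟨hint, heq⟩ := integral_erfF' hz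
    obtain ⟨hint2, heq2⟩ := integral_s_gauss hz0
    have hR : erfc z - erfF z
        = ∫ s in Ioi z, (Real.exp (-s^2) - Real.exp (-s^2) * (1 - 3/(4*s^4))) := by
      rw [integral_sub (integrableOn_gauss z) hint, heq]; rfl
    have hptwise : ∀ s ∈ Ioi z, Real.exp (-s^2) - Real.exp (-s^2) * (1 - 3/(4*s^4))
        = 3/(4*s^4) * Real.exp (-s^2) := by
      intro s hs
      ring
    constructor
    · rw [hR]
      apply setIntegral_nonneg measurableSet_Ioi
      intro s hs
      rw [hptwise s hs]
      have hs0 : (0:ℝ) < s := lt_trans hz0 hs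
      positivity
    · rw [hR]
      have hbd : ∀ s ∈ Ioi z, Real.exp (-s^2) - Real.exp (-s^2) * (1 - 3/(4*s^4))
          ≤ 3/(4*z^5) * (s * Real.exp (-s^2)) := by
        intro s hs
        rw [hptwise s hs]
        have hzs : z ≤ s := le_of_lt hs
        have hs0 : (0:ℝ) < s := lt_trans hz0 hs
        have h4 : 1/s^4 ≤ s/z^5 := by
          rw [div_le_div_iff₀ (by positivity) (by positivity)]
          calc 1 * z^5 = z^5 := by ring
            _ ≤ s^5 := by gcongr
            _ = s * s^4 := by ring
        have hexp := (Real.exp_pos (-s^2)).le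
        calc 3/(4*s^4) * Real.exp (-s^2) = (3/4) * (1/s^4) * Real.exp (-s^2) := by ring
          _ ≤ (3/4) * (s/z^5) * Real.exp (-s^2) := by
              apply mul_le_mul_of_nonneg_right _ hexp
              apply mul_le_mul_of_nonneg_left h4 (by norm_num)
          _ = 3/(4*z^5) * (s * Real.exp (-s^2)) := by ring
      calc (∫ s in Ioi z, (Real.exp (-s^2) - Real.exp (-s^2) * (1 - 3/(4*s^4))))
          ≤ ∫ s in Ioi z, 3/(4*z^5) * (s * Real.exp (-s^2)) := by
            apply setIntegral_mono_on
            · exact (integrableOn_gauss z).sub hint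
            · exact hint2.const_mul _
            · exact measurableSet_Ioi
            · exact hbd
        _ = 3/(4*z^5) * (Real.exp (-z^2)/2) := by rw [integral_const_mul, heq2]
        _ = 3/(8*z^5) * Real.exp (-z^2) := by ring
  have hev : ∀ᶠ z : ℝ in atTop, (1:ℝ) ≤ z := eventually_ge_atTop 1
  apply squeeze_zero' (g := fun z => 3/(8*z^2))
  · filter_upwards [hev] with z hz
    have hz0 : 0 < z := lt_of_lt_of_le one_pos hz
    obtain ⟨h1, _⟩ := key z hz
    have hrw : z ^ 3 * (Real.exp (z ^ 2) * erfc z - 1 / (2 * z) + 1 / (4 * z ^ 3))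
        = z^3 * Real.exp (z^2) * (erfc z - erfF z) := by
      unfold erfF
      rw [Real.exp_neg]
      field_simp
      ring
    rw [hrw]
    positivity
  · filter_upwards [hev] with z hz
    have hz0 : 0 < z := lt_of_lt_of_le one_pos hz
    obtain ⟨h1, h2⟩ := key z hz
    have hrw : z ^ 3 * (Real.exp (z ^ 2) * erfc z - 1 / (2 * z) + 1 / (4 * z ^ 3))
        = z^3 * Real.exp (z^2) * (erfc z - erfF z) := by
      unfold erfF
      rw [Real.exp_neg]
      field_simp
      ring
    rw [hrw]
    calc z^3 * Real.exp (z^2) * (erfc z - erfF z)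
        ≤ z^3 * Real.exp (z^2) * (3/(8*z^5) * Real.exp (-z^2)) := by
          apply mul_le_mul_of_nonneg_left h2 (by positivity)
      _ = 3/(8*z^2) * (Real.exp (z^2) * Real.exp (-z^2)) := by field_simp
      _ = 3/(8*z^2) := by rw [← Real.exp_add]; simp
  · have : Tendsto (fun z : ℝ => 8*z^2) atTop atTop :=
      (tendsto_pow_atTop (by norm_num)).const_mul_atTop (by norm_num)
    simpa using Tendsto.div_atTop (tendsto_const_nhds (x := (3:ℝ))) this
end

section
/- As z → ∞, z²·|z erfc(z) e^{z²} - 1/2| tends to 1/4. -/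
open Set Filter MeasureTheory Real

lemma exp_sq_int : MeasureTheory.Integrable (fun s : ℝ => Real.exp (-s^2)) := by
  simpa using integrable_exp_neg_mul_sq (b := 1) one_pos

lemma mul_exp_sq_int : MeasureTheory.Integrable (fun s : ℝ => s * Real.exp (-s^2)) := by
  simpa using integrable_mul_exp_neg_mul_sq (b := 1) one_pos

lemma tend_exp : Filter.Tendsto (fun s : ℝ => Real.exp (-s^2)) atTop (nhds 0) := by
  have h : Tendsto (fun s : ℝ => -s^2) atTop atBot :=
    tendsto_neg_atTop_atBot.comp (tendsto_pow_atTop two_ne_zero)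
  exact Real.tendsto_exp_atBot.comp h

lemma hd_exp (x : ℝ) :
    HasDerivAt (fun s : ℝ => Real.exp (-s^2)) (-2*x*Real.exp (-x^2)) x := by
  have h : HasDerivAt (fun s : ℝ => -s^2) (-(2*x)) x := by
    exact (by simpa using (hasDerivAt_pow 2 x).neg : HasDerivAt (-fun x : ℝ => x^2) (-(2*x)) x)
  convert h.exp using 1
  ring

lemma hdF1 (x : ℝ) :
    HasDerivAt (fun s : ℝ => -Real.exp (-s^2)/2) (x*Real.exp (-x^2)) x := by
  refine ((hd_exp x).neg.div_const 2).congr_deriv ?_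
  ring

lemma hdF2 (x : ℝ) (hx : x ≠ 0) :
    HasDerivAt (fun s : ℝ => -Real.exp (-s^2)/(2*s))
      (Real.exp (-x^2) + Real.exp (-x^2)/(2*x^2)) x := by
  have h1 : HasDerivAt (fun s : ℝ => -Real.exp (-s^2)) (2*x*Real.exp (-x^2)) x := by
    refine (hd_exp x).neg.congr_deriv ?_; ring
  have h2 : HasDerivAt (fun s : ℝ => 2*s) 2 x := by
    simpa using (hasDerivAt_id x).const_mul (2:ℝ)
  have h := h1.div h2 (mul_ne_zero two_ne_zero hx)
  refine h.congr_deriv ?_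
  field_simp
  ring

lemma hdF3 (x : ℝ) (hx : x ≠ 0) :
    HasDerivAt (fun s : ℝ => -Real.exp (-s^2)/(4*s^3))
      (Real.exp (-x^2)/(2*x^2) + 3/4*(Real.exp (-x^2)/x^4)) x := by
  have h1 : HasDerivAt (fun s : ℝ => -Real.exp (-s^2)) (2*x*Real.exp (-x^2)) x := by
    refine (hd_exp x).neg.congr_deriv ?_; ring
  have h2 : HasDerivAt (fun s : ℝ => 4*s^3) (12*x^2) x := by
    have := (hasDerivAt_pow 3 x).const_mul (4:ℝ)
    refine this.congr_deriv ?_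
    push_cast; ring
  have h := h1.div h2 (by positivity)
  refine h.congr_deriv ?_
  field_simp
  ring

lemma tendF (c : ℝ) (hc : 1 ≤ c) (k : ℕ) :
    Filter.Tendsto (fun s : ℝ => -Real.exp (-s^2)/(c*s^k)) atTop (nhds 0) := by
  refine squeeze_zero_norm' ?_ tend_exp
  filter_upwards [eventually_ge_atTop (1:ℝ)] with s hs
  have hsk : (1:ℝ) ≤ s^k := one_le_pow₀ hs
  have hb : (1:ℝ) ≤ c * s^k := by nlinarith
  rw [Real.norm_eq_abs, abs_div, abs_neg, abs_of_pos (Real.exp_pos _),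
    abs_of_nonneg (by linarith : (0:ℝ) ≤ c * s^k)]
  exact div_le_self (Real.exp_pos _).le hb

lemma intk (z : ℝ) (hz : 1 ≤ z) (k : ℕ) :
    MeasureTheory.IntegrableOn (fun s : ℝ => Real.exp (-s^2)/s^k) (Set.Ioi z) := by
  refine MeasureTheory.Integrable.mono exp_sq_int.integrableOn ?_ ?_
  · exact (((continuous_neg.comp (continuous_pow 2)).rexp).measurable.div
      (measurable_id.pow_const k)).aestronglyMeasurable
  · rw [MeasureTheory.ae_restrict_iff' measurableSet_Ioi]
    filter_upwards with s hs
    have hs1 : (1:ℝ) ≤ s := le_of_lt (lt_of_le_of_lt hz hs)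
    have hsk : (1:ℝ) ≤ s^k := one_le_pow₀ hs1
    rw [Real.norm_eq_abs, Real.norm_eq_abs, abs_div, abs_of_pos (Real.exp_pos _),
      abs_of_nonneg (by linarith : (0:ℝ) ≤ s^k)]
    exact div_le_self (Real.exp_pos _).le hsk

lemma int_mul_exp (z : ℝ) (hz : 1 ≤ z) :
    ∫ s in Set.Ioi z, s * Real.exp (-s^2) = Real.exp (-z^2)/2 := by
  have h := integral_Ioi_of_hasDerivAt_of_tendsto' (a := z)
    (f := fun s : ℝ => -Real.exp (-s^2)/2) (f' := fun s : ℝ => s * Real.exp (-s^2))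
    (fun x _ => hdF1 x) mul_exp_sq_int.integrableOn (by simpa using tendF 2 (by norm_num) 0)
  rw [h]
  show (0:ℝ) - -Real.exp (-z^2)/2 = Real.exp (-z^2)/2
  ring

lemma key (z : ℝ) (hz : 1 ≤ z) :
    erfc z = Real.exp (-z^2)/(2*z) - Real.exp (-z^2)/(4*z^3)
      + 3/4 * ∫ s in Set.Ioi z, Real.exp (-s^2)/s^4 := by
  have hz0 : (0:ℝ) < z := lt_of_lt_of_le one_pos hz
  have hne : ∀ x ∈ Set.Ici z, x ≠ 0 := fun x hx => by
    have : (0:ℝ) < x := lt_of_lt_of_le hz0 hx; linarith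
  have i0 := exp_sq_int.integrableOn (s := Set.Ioi z)
  have i2 := intk z hz 2
  have i4 := intk z hz 4
  have I2 : erfc z + ∫ s in Set.Ioi z, Real.exp (-s^2)/(2*s^2)
      = Real.exp (-z^2)/(2*z) := by
    have h := integral_Ioi_of_hasDerivAt_of_tendsto'
      (f := fun s : ℝ => -Real.exp (-s^2)/(2*s))
      (f' := fun s : ℝ => Real.exp (-s^2) + Real.exp (-s^2)/(2*s^2))
      (fun x hx => hdF2 x (hne x hx))
      (by
        have : MeasureTheory.IntegrableOn
            (fun s : ℝ => Real.exp (-s^2)/(2*s^2)) (Set.Ioi z) := by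
          exact (i2.const_mul (1/2 : ℝ)).congr
            (Filter.Eventually.of_forall fun s => by ring)
        exact i0.add this)
      (by simpa using tendF 2 (by norm_num) 1)
    have hsplit : ∫ s in Set.Ioi z, (Real.exp (-s^2) + Real.exp (-s^2)/(2*s^2))
        = erfc z + ∫ s in Set.Ioi z, Real.exp (-s^2)/(2*s^2) := by
      rw [MeasureTheory.integral_add i0]
      · rfl
      · exact (i2.const_mul (1/2 : ℝ)).congr
          (Filter.Eventually.of_forall fun s => by ring)
    rw [hsplit] at h
    rw [h]
    show (0:ℝ) - -Real.exp (-z^2)/(2*z) = Real.exp (-z^2)/(2*z)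
    ring
  have I3 : (∫ s in Set.Ioi z, Real.exp (-s^2)/(2*s^2))
      + 3/4 * ∫ s in Set.Ioi z, Real.exp (-s^2)/s^4
      = Real.exp (-z^2)/(4*z^3) := by
    have ha : MeasureTheory.IntegrableOn
        (fun s : ℝ => Real.exp (-s^2)/(2*s^2)) (Set.Ioi z) := by
      exact (i2.const_mul (1/2 : ℝ)).congr
        (Filter.Eventually.of_forall fun s => by ring)
    have hb : MeasureTheory.IntegrableOn
        (fun s : ℝ => 3/4*(Real.exp (-s^2)/s^4)) (Set.Ioi z) :=
      i4.const_mul (3/4 : ℝ)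
    have h := integral_Ioi_of_hasDerivAt_of_tendsto'
      (f := fun s : ℝ => -Real.exp (-s^2)/(4*s^3))
      (f' := fun s : ℝ => Real.exp (-s^2)/(2*s^2) + 3/4*(Real.exp (-s^2)/s^4))
      (fun x hx => hdF3 x (hne x hx)) (ha.add hb) (tendF 4 (by norm_num) 3)
    rw [MeasureTheory.integral_add ha hb, MeasureTheory.integral_const_mul] at h
    rw [h]
    show (0:ℝ) - -Real.exp (-z^2)/(4*z^3) = Real.exp (-z^2)/(4*z^3)
    ring
  have hz3 : z^3 ≠ 0 := by positivity
  linarith [I2, I3]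

lemma Rbound (z : ℝ) (hz : 1 ≤ z) :
    ∫ s in Set.Ioi z, Real.exp (-s^2)/s^4 ≤ Real.exp (-z^2)/(2*z^5) := by
  have hz0 : (0:ℝ) < z := lt_of_lt_of_le one_pos hz
  have hmono : ∫ s in Set.Ioi z, Real.exp (-s^2)/s^4
      ≤ ∫ s in Set.Ioi z, (1/z^5) * (s * Real.exp (-s^2)) := by
    refine MeasureTheory.setIntegral_mono_on (intk z hz 4)
      (mul_exp_sq_int.integrableOn.const_mul _) measurableSet_Ioi ?_
    intro s hs
    have hzs : z < s := hs
    have hs0 : (0:ℝ) < s := lt_trans hz0 hzs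
    rw [div_le_iff₀ (by positivity)]
    have h5 : z^5 ≤ s^5 := pow_le_pow_left₀ hz0.le hzs.le 5
    have he := (Real.exp_pos (-s^2)).le
    calc Real.exp (-s^2) = (1/z^5) * (Real.exp (-s^2) * z^5) := by
          field_simp
      _ ≤ (1/z^5) * (s * Real.exp (-s^2)) * s^4 := by
          rw [mul_assoc ((1:ℝ)/z^5)]
          refine mul_le_mul_of_nonneg_left ?_ (by positivity)
          calc Real.exp (-s^2) * z^5 ≤ Real.exp (-s^2) * s^5 :=
                mul_le_mul_of_nonneg_left h5 he
            _ = s * Real.exp (-s^2) * s^4 := by ring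
  calc ∫ s in Set.Ioi z, Real.exp (-s^2)/s^4
      ≤ ∫ s in Set.Ioi z, (1/z^5) * (s * Real.exp (-s^2)) := hmono
    _ = (1/z^5) * ∫ s in Set.Ioi z, s * Real.exp (-s^2) :=
        MeasureTheory.integral_const_mul _ _
    _ = Real.exp (-z^2)/(2*z^5) := by
        rw [int_mul_exp z hz]; field_simp

theorem erfc_deviation_asymptotic :
    Filter.Tendsto
      (fun z : ℝ => z ^ 2 * |z * erfc z * Real.exp (z ^ 2) - 1 / 2|)
      Filter.atTop (nhds (1 / 4)) := by
  set g : ℝ → ℝ := fun z => 3/4 * z^3 * Real.exp (z^2)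
    * ∫ s in Set.Ioi z, Real.exp (-s^2)/s^4 with hg
  have hgle : ∀ z : ℝ, 1 ≤ z → g z ≤ 3/(8*z^2) := by
    intro z hz
    have hz0 : (0:ℝ) < z := lt_of_lt_of_le one_pos hz
    have hR := Rbound z hz
    have he : (0:ℝ) < Real.exp (z^2) := Real.exp_pos _
    calc g z ≤ 3/4 * z^3 * Real.exp (z^2) * (Real.exp (-z^2)/(2*z^5)) := by
          refine mul_le_mul_of_nonneg_left hR (by positivity)
      _ = 3/(8*z^2) := by
          rw [Real.exp_neg]
          have h0 : Real.exp (z^2) ≠ 0 := (Real.exp_pos _).ne'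
          field_simp
          ring
  have hgnn : ∀ z : ℝ, 1 ≤ z → 0 ≤ g z := by
    intro z hz
    have : 0 ≤ ∫ s in Set.Ioi z, Real.exp (-s^2)/s^4 :=
      MeasureTheory.setIntegral_nonneg measurableSet_Ioi fun s hs => by positivity
    have hz0 : (0:ℝ) < z := lt_of_lt_of_le one_pos hz
    positivity
  have hgtend : Filter.Tendsto g atTop (nhds 0) := by
    refine squeeze_zero' (g := fun z : ℝ => 3/(8*z^2)) ?_ ?_ ?_
    · filter_upwards [eventually_ge_atTop (1:ℝ)] with z hz using hgnn z hz
    · filter_upwards [eventually_ge_atTop (1:ℝ)] with z hz using hgle z hz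
    · have h1 : Tendsto (fun z : ℝ => z^2) atTop atTop := tendsto_pow_atTop two_ne_zero
      have h2 : Tendsto (fun z : ℝ => (z^2)⁻¹) atTop (nhds 0) := h1.inv_tendsto_atTop
      have := h2.const_mul (3/8 : ℝ)
      simp only [mul_zero] at this
      refine this.congr (fun z => by rw [div_eq_mul_inv]; ring_nf)
  have habs : Tendsto (fun z : ℝ => |g z - 1/4|) atTop (nhds (1/4)) := by
    have h1 : Tendsto (fun z : ℝ => g z - 1/4) atTop (nhds (0 - 1/4)) :=
      hgtend.sub_const _
    have h2 := h1.abs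
    norm_num [abs_of_nonneg] at h2
    exact h2
  refine habs.congr' ?_
  filter_upwards [eventually_ge_atTop (1:ℝ)] with z hz
  have hz0 : (0:ℝ) < z := lt_of_lt_of_le one_pos hz
  have hk := key z hz
  have hee : Real.exp (z^2) * Real.exp (-z^2) = 1 := by
    rw [← Real.exp_add]; simp
  have hid : z * erfc z * Real.exp (z^2) - 1/2 = -(1/(4*z^2)) + (g z) / z^2 := by
    rw [hk, hg, Real.exp_neg]
    have h0 : Real.exp (z^2) ≠ 0 := (Real.exp_pos _).ne'
    have hz2 : (z:ℝ)^2 ≠ 0 := by positivity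
    have hz3 : (z:ℝ)^3 ≠ 0 := by positivity
    field_simp
    ring
  rw [hid]
  have habs2 : z^2 * |(-(1/(4*z^2)) + g z / z^2)| = |z^2 * (-(1/(4*z^2)) + g z / z^2)| := by
    rw [abs_mul, abs_of_pos (by positivity : (0:ℝ) < z^2)]
  rw [habs2]
  congr 1
  have hz2 : (z:ℝ)^2 ≠ 0 := by positivity
  field_simp
  ring
end

section
/- Let p, q, x be real with |x-p| > |x-q| > 0, and fix t > 0. For ε > 0 set P_ε = |x-p|/√(2tε) and Q_ε = |x-q|/√(2tε). Then erfc(P_ε)/erfc(Q_ε) → 0 as ε → 0⁺. -/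
open Real Set Filter MeasureTheory

lemma integrable_exp_neg_sq' : Integrable (fun s : ℝ => Real.exp (-s^2)) := by
  have := integrable_exp_neg_mul_sq (one_pos (α := ℝ))
  simpa using this

lemma erfc_nonneg (z : ℝ) : 0 ≤ erfc z := by
  apply setIntegral_nonneg measurableSet_Ioi
  intro s _
  positivity

lemma erfc_le {z : ℝ} (hz : 0 < z) : erfc z ≤ Real.exp (-z^2) / z := by
  have hI : IntegrableOn (fun s : ℝ => Real.exp (-(z*s))) (Ioi z) := by
    simpa [neg_mul] using exp_neg_integrableOn_Ioi z hz
  have hderiv : ∀ s ∈ Ici z, HasDerivAt (fun s : ℝ => -Real.exp (-(z*s)) / z)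
      (Real.exp (-(z*s))) s := by
    intro s _
    have h1 : HasDerivAt (fun s : ℝ => -(z*s)) (-z) s := by
      have := (hasDerivAt_id' s).const_mul (-z); simp only [mul_one, neg_mul] at this; exact this
    have h2 := (h1.exp).neg.div_const z
    exact h2.congr_deriv (by field_simp)
  have hlim : Tendsto (fun s : ℝ => -Real.exp (-(z*s)) / z) atTop (nhds 0) := by
    have h0 : Tendsto (fun s : ℝ => -(z*s)) atTop atBot :=
      ((tendsto_const_mul_atBot_of_neg (f := fun s : ℝ => s) (r := -z)
        (neg_neg_iff_pos.mpr hz)).mpr tendsto_id).congr (fun s => by ring)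
    have h2 : Tendsto (fun s : ℝ => Real.exp (-(z*s))) atTop (nhds 0) :=
      Real.tendsto_exp_atBot.comp h0
    simpa using (h2.neg.div_const z)
  have hint : ∫ s in Ioi z, Real.exp (-(z*s)) = Real.exp (-z^2) / z := by
    rw [integral_Ioi_of_hasDerivAt_of_tendsto' hderiv hI hlim]
    rw [← sq]
    ring
  rw [← hint]
  apply setIntegral_mono_on
  · exact integrable_exp_neg_sq'.integrableOn
  · exact hI
  · exact measurableSet_Ioi
  · intro s hs
    apply Real.exp_le_exp.mpr
    simp only [neg_le_neg_iff]
    have : z ≤ s := le_of_lt hs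
    nlinarith

lemma erfc_ge {z : ℝ} (hz : 0 ≤ z) : Real.exp (-(z+1)^2) ≤ erfc z := by
  have h1 : ∫ s in Ioc z (z+1), Real.exp (-(z+1)^2) ≤ ∫ s in Ioc z (z+1), Real.exp (-s^2) := by
    apply setIntegral_mono_on
    · exact integrableOn_const (by simp)
    · exact integrable_exp_neg_sq'.integrableOn
    · exact measurableSet_Ioc
    · intro s hs
      apply Real.exp_le_exp.mpr
      simp only [neg_le_neg_iff]
      have h2 := hs.1
      have h3 := hs.2
      nlinarith
  have h2 : ∫ s in Ioc z (z+1), Real.exp (-(z+1)^2) = Real.exp (-(z+1)^2) := by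
    rw [setIntegral_const]
    simp [Real.volume_Ioc]
  have h3 : ∫ s in Ioc z (z+1), Real.exp (-s^2) ≤ erfc z := by
    apply setIntegral_mono_set integrable_exp_neg_sq'.integrableOn
    · filter_upwards with s using by positivity
    · exact Eventually.of_forall (fun s hs => hs.1)
  linarith

lemma key_s7 (a b : ℝ) (hb : 0 < b) (hab : b < a) :
    Tendsto (fun r => erfc (a*r) / erfc (b*r)) atTop (nhds 0) := by
  have ha : 0 < a := hb.trans hab
  have hg : Tendsto (fun r => Real.exp ((b*r+1)^2 - (a*r)^2) * (a*r)⁻¹) atTop (nhds 0) := by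
    have h1 : Tendsto (fun r : ℝ => (b*r+1)^2 - (a*r)^2) atTop atBot := by
      have hq : ∀ r : ℝ, (b*r+1)^2 - (a*r)^2 = r * ((b^2-a^2)*r + 2*b) + 1 := by
        intro r; ring
      simp_rw [hq]
      apply tendsto_atBot_add_const_right
      apply Filter.Tendsto.atTop_mul_atBot₀ tendsto_id
      apply tendsto_atBot_add_const_right
      exact (tendsto_const_mul_atBot_of_neg (by nlinarith)).mpr tendsto_id
    have h2 : Tendsto (fun r => Real.exp ((b*r+1)^2 - (a*r)^2)) atTop (nhds 0) :=
      Real.tendsto_exp_atBot.comp h1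
    have h3 : Tendsto (fun r : ℝ => (a*r)⁻¹) atTop (nhds 0) :=
      (tendsto_id.const_mul_atTop ha).inv_tendsto_atTop
    simpa using h2.mul h3
  apply tendsto_of_tendsto_of_tendsto_of_le_of_le' tendsto_const_nhds hg
  · filter_upwards [eventually_gt_atTop 0] with r hr
    have hbr : 0 < erfc (b*r) := lt_of_lt_of_le (Real.exp_pos _) (erfc_ge (by positivity))
    exact div_nonneg (erfc_nonneg _) hbr.le
  · filter_upwards [eventually_gt_atTop 0] with r hr
    have har : 0 < a * r := by positivity
    have h1 : erfc (a*r) ≤ Real.exp (-(a*r)^2) / (a*r) := erfc_le har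
    have h2 : Real.exp (-(b*r+1)^2) ≤ erfc (b*r) := erfc_ge (by positivity)
    have h3 : erfc (a*r) / erfc (b*r) ≤ (Real.exp (-(a*r)^2) / (a*r)) / Real.exp (-(b*r+1)^2) :=
      div_le_div₀ (by positivity) h1 (Real.exp_pos _) h2
    calc erfc (a*r) / erfc (b*r) ≤ (Real.exp (-(a*r)^2) / (a*r)) / Real.exp (-(b*r+1)^2) := h3
      _ = Real.exp ((b*r+1)^2 - (a*r)^2) * (a*r)⁻¹ := by
          rw [Real.exp_sub, Real.exp_neg, Real.exp_neg]
          field_simp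

theorem erfc_ratio_tendsto_zero (p q x t : ℝ) (hpq : |x - q| < |x - p|)
    (hq : 0 < |x - q|) (ht : 0 < t) :
    Filter.Tendsto
      (fun ε : ℝ => erfc (|x - p| / Real.sqrt (2 * t * ε)) / erfc (|x - q| / Real.sqrt (2 * t * ε)))
      (nhdsWithin 0 (Set.Ioi 0)) (nhds 0) := by
  have hr : Tendsto (fun ε : ℝ => (Real.sqrt (2 * t * ε))⁻¹) (nhdsWithin 0 (Set.Ioi 0)) atTop := by
    apply Filter.Tendsto.inv_tendsto_nhdsGT_zero
    rw [tendsto_nhdsWithin_iff]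
    constructor
    · have : Tendsto (fun ε : ℝ => Real.sqrt (2 * t * ε)) (nhdsWithin 0 (Set.Ioi 0)) (nhds (Real.sqrt (2 * t * 0))) := by
        apply Tendsto.comp (Real.continuous_sqrt.tendsto _)
        exact (tendsto_id.const_mul _).mono_left nhdsWithin_le_nhds
      simpa using this
    · filter_upwards [self_mem_nhdsWithin] with ε (hε : 0 < ε)
      exact Real.sqrt_pos.mpr (by positivity)
  have := (key_s7 _ _ hq hpq).comp hr
  apply this.congr
  intro ε
  simp [Function.comp, div_eq_mul_inv]
end
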